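/- Let f be an electrical s-t flow on a graph G with resistances r, and suppose edge h accounts for a β fraction of the total energy: f(h)²·r_h = β·E_r(f). For γ > 0, define r' by r'_h = γ·r_h and r'_e = r_e for e ≠ h. Then R_eff(r') ≥ (γ/(β + γ(1-β)))·R_eff(r). -/

import Mathlib

open Finset

/-- Effective s-t conductance: infimum over potentials with φ(s)=1, φ(t)=0 of the
Dirichlet energy. -/
noncomputable def Ceff {V E : Type*} [Fintype E] (ep : E → V × V) (s t : V)
    (r : E → ℝ) : ℝ :=
  sInf {x | ∃ φ : V → ℝ, φ s = 1 ∧ φ t = 0 ∧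
    x = ∑ e, (φ (ep e).1 - φ (ep e).2) ^ 2 / r e}

/-- Effective s-t resistance. -/
noncomputable def Reff {V E : Type*} [Fintype E] (ep : E → V × V) (s t : V)
    (r : E → ℝ) : ℝ :=
  1 / Ceff ep s t r

section aux
variable {V E : Type*} [Fintype E] (ep : E → V × V) (s t : V)

lemma Ceff_bddBelow (w : E → ℝ) (hw : ∀ e, 0 < w e) :
    BddBelow {x | ∃ φ : V → ℝ, φ s = 1 ∧ φ t = 0 ∧
      x = ∑ e, (φ (ep e).1 - φ (ep e).2) ^ 2 / w e} := by
  refine ⟨0, ?_⟩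
  rintro x ⟨ψ, -, -, rfl⟩
  exact Finset.sum_nonneg fun e _ => div_nonneg (sq_nonneg _) (hw e).le

lemma Ceff_le (w : E → ℝ) (hw : ∀ e, 0 < w e) (ψ : V → ℝ) (h1 : ψ s = 1) (h2 : ψ t = 0) :
    Ceff ep s t w ≤ ∑ e, (ψ (ep e).1 - ψ (ep e).2) ^ 2 / w e :=
  csInf_le (Ceff_bddBelow ep s t w hw) ⟨ψ, h1, h2, rfl⟩

lemma Ceff_ge (w : E → ℝ) (hst : s ≠ t) (c : ℝ)
    (hc : ∀ ψ : V → ℝ, ψ s = 1 → ψ t = 0 →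
      c ≤ ∑ e, (ψ (ep e).1 - ψ (ep e).2) ^ 2 / w e) :
    c ≤ Ceff ep s t w := by
  classical
  refine le_csInf ⟨_, fun v => if v = s then (1:ℝ) else 0, if_pos rfl, if_neg (Ne.symm hst), rfl⟩ ?_
  rintro x ⟨ψ, h1, h2, rfl⟩
  exact hc ψ h1 h2

end aux
theorem reff_increase_of_scaling_edge {V E : Type*} [Fintype V] [Fintype E]
    [DecidableEq E]
    (ep : E → V × V) (s t : V) (hst : s ≠ t)
    (r r' : E → ℝ) (hr : ∀ e, 0 < r e)
    (f : E → ℝ) (φ : V → ℝ) (h : E) (β γ : ℝ) (hγ : 0 < γ)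
    (hφs : φ s = 1) (hφt : φ t = 0)
    (hmin : ∑ e, (φ (ep e).1 - φ (ep e).2) ^ 2 / r e = Ceff ep s t r)
    (hOhm : ∀ e, f e = (φ (ep e).1 - φ (ep e).2) / r e)
    (hβ : f h ^ 2 * r h = β * ∑ e, r e * f e ^ 2)
    (hr' : ∀ e, r' e = if e = h then γ * r e else r e) :
    Reff ep s t r' ≥ γ / (β + γ * (1 - β)) * Reff ep s t r := by
  classical
  have hr'pos : ∀ e, 0 < r' e := by
    intro e; rw [hr' e]; split
    · exact mul_pos hγ (hr e)
    · exact hr e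
  set C := Ceff ep s t r with hC
  have hCnn : 0 ≤ C := by
    refine Ceff_ge ep s t r hst 0 fun ψ h1 h2 => ?_
    exact Finset.sum_nonneg fun e _ => div_nonneg (sq_nonneg _) (hr e).le
  have hC'nn : 0 ≤ Ceff ep s t r' := by
    refine Ceff_ge ep s t r' hst 0 fun ψ h1 h2 => ?_
    exact Finset.sum_nonneg fun e _ => div_nonneg (sq_nonneg _) (hr'pos e).le
  -- energy identity: ∑ r e * f e ^ 2 = C
  have hterm : ∀ e, r e * f e ^ 2 = (φ (ep e).1 - φ (ep e).2) ^ 2 / r e := by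
    intro e
    rw [hOhm e]
    field_simp
  have hE : ∑ e, r e * f e ^ 2 = C := by
    rw [← hmin]; exact Finset.sum_congr rfl fun e _ => hterm e
  have hfh : f h ^ 2 * r h = (φ (ep h).1 - φ (ep h).2) ^ 2 / r h := by
    rw [mul_comm]; exact hterm h
  have hβC : (φ (ep h).1 - φ (ep h).2) ^ 2 / r h = β * C := by
    rw [← hfh, hβ, hE]
  rcases eq_or_lt_of_le hCnn with hC0 | hCpos
  · -- C = 0 case
    rw [ge_iff_le, Reff, Reff, ← hC, ← hC0, div_zero, mul_zero]
    exact div_nonneg zero_le_one hC'nn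
  · -- C > 0
    have hβnn : 0 ≤ β := by
      have : 0 ≤ β * C := by rw [← hβC]; exact div_nonneg (sq_nonneg _) (hr h).le
      nlinarith
    have hβ1 : β ≤ 1 := by
      have hle : f h ^ 2 * r h ≤ ∑ e, r e * f e ^ 2 := by
        rw [mul_comm]
        exact Finset.single_le_sum (fun e _ => mul_nonneg (hr e).le (sq_nonneg _))
          (Finset.mem_univ h)
      rw [hβ, hE] at hle
      nlinarith
    set D := β + γ * (1 - β) with hD
    have hDpos : 0 < D := by
      rcases eq_or_lt_of_le hβ1 with rfl | hlt
      · simp [hD]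
      · have : 0 < γ * (1 - β) := mul_pos hγ (by linarith)
        linarith
    -- upper bound on Ceff r'
    have hub : Ceff ep s t r' ≤ C * D / γ := by
      have h1 : Ceff ep s t r' ≤ ∑ e, (φ (ep e).1 - φ (ep e).2) ^ 2 / r' e :=
        Ceff_le ep s t r' hr'pos φ hφs hφt
    -- compute the sum
      have h2 : ∑ e, (φ (ep e).1 - φ (ep e).2) ^ 2 / r' e
          = (∑ e, (φ (ep e).1 - φ (ep e).2) ^ 2 / r e)
            - (φ (ep h).1 - φ (ep h).2) ^ 2 / r h
            + (φ (ep h).1 - φ (ep h).2) ^ 2 / (γ * r h) := by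
        rw [← Finset.sum_erase_add _ _ (Finset.mem_univ h),
            ← Finset.sum_erase_add _ (fun e => (φ (ep e).1 - φ (ep e).2) ^ 2 / r e)
              (Finset.mem_univ h)]
        have : ∀ e ∈ Finset.univ.erase h,
            (φ (ep e).1 - φ (ep e).2) ^ 2 / r' e = (φ (ep e).1 - φ (ep e).2) ^ 2 / r e := by
          intro e he
          rw [hr' e, if_neg (Finset.ne_of_mem_erase he)]
        rw [Finset.sum_congr rfl this, hr' h, if_pos rfl]
        ring
      rw [h2, hmin, hβC] at h1
      have h3 : (φ (ep h).1 - φ (ep h).2) ^ 2 / (γ * r h) = β * C / γ := by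
        rw [div_mul_eq_div_div_swap, hβC]
      rw [h3] at h1
      calc Ceff ep s t r' ≤ C - β * C + β * C / γ := h1
        _ = C * D / γ := by rw [hD]; field_simp; ring
    -- lower bound on Ceff r'
    have hlb : min 1 γ⁻¹ * C ≤ Ceff ep s t r' := by
      refine Ceff_ge ep s t r' hst _ fun ψ h1 h2 => ?_
      have step : ∀ e, min 1 γ⁻¹ * ((ψ (ep e).1 - ψ (ep e).2) ^ 2 / r e)
          ≤ (ψ (ep e).1 - ψ (ep e).2) ^ 2 / r' e := by
        intro e
        rw [hr' e]
        have hnn : 0 ≤ (ψ (ep e).1 - ψ (ep e).2) ^ 2 / r e :=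
          div_nonneg (sq_nonneg _) (hr e).le
        split
        · have heq : (ψ (ep e).1 - ψ (ep e).2) ^ 2 / (γ * r e)
              = γ⁻¹ * ((ψ (ep e).1 - ψ (ep e).2) ^ 2 / r e) := by
            field_simp
          rw [heq]
          exact mul_le_mul_of_nonneg_right (min_le_right _ _) hnn
        · exact (mul_le_mul_of_nonneg_right (min_le_left _ _) hnn).trans (one_mul _).le
      have hmnn : (0:ℝ) ≤ min 1 γ⁻¹ := le_min zero_le_one (inv_nonneg.mpr hγ.le)
      have hCle : C ≤ ∑ e, (ψ (ep e).1 - ψ (ep e).2) ^ 2 / r e := by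
        rw [hC]; exact Ceff_le ep s t r hr ψ h1 h2
      calc min 1 γ⁻¹ * C ≤ min 1 γ⁻¹ * ∑ e, (ψ (ep e).1 - ψ (ep e).2) ^ 2 / r e :=
            mul_le_mul_of_nonneg_left hCle hmnn
        _ = ∑ e, min 1 γ⁻¹ * ((ψ (ep e).1 - ψ (ep e).2) ^ 2 / r e) := Finset.mul_sum _ _ _
        _ ≤ ∑ e, (ψ (ep e).1 - ψ (ep e).2) ^ 2 / r' e :=
            Finset.sum_le_sum fun e _ => step e
    have hC'pos : 0 < Ceff ep s t r' := by
      have hm : 0 < min 1 γ⁻¹ := lt_min one_pos (inv_pos.mpr hγ)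
      exact lt_of_lt_of_le (mul_pos hm hCpos) hlb
    -- conclude
    rw [ge_iff_le, Reff, Reff, ← hC]
    have key : 1 / (C * D / γ) ≤ 1 / Ceff ep s t r' :=
      one_div_le_one_div_of_le hC'pos hub
    refine le_trans (le_of_eq ?_) key
    rw [one_div_div]
    rw [eq_comm]
    field_simp
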